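/- arXiv:1910.09262 — 2 statements merged into one kernel-verified Lean document; each statement's English description precedes it below -/
import Mathlib

section
/- For any prime p ≥ 5 with p ≡ 2 (mod 3), the sum ∑_{k=0}^{(p-5)/3} 1/(3k+1) ≡ 1 (mod p). -/
/-- The `n`-th harmonic number as a rational. -/
def H (n : ℕ) : ℚ := ∑ i ∈ Finset.range n, (1 : ℚ) / (i + 1)

/-- Congruence of rationals modulo `m`: the difference is `m` times a rational
whose denominator is not divisible by `m`'s prime. -/
def ratCongr (m : ℕ) (x y : ℚ) : Prop :=
  ∃ r : ℚ, ¬ ((m : ℤ) ∣ (r.den : ℤ)) ∧ x - y = (m : ℚ) * r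

lemma den_sum_not_dvd (p : ℕ) (hp : p.Prime) (s : Finset ℕ) (f : ℕ → ℚ)
    (h : ∀ i ∈ s, ¬ p ∣ (f i).den) : ¬ p ∣ (∑ i ∈ s, f i).den := by
  classical
  induction s using Finset.induction with
  | empty => simpa using hp.one_lt.ne'
  | @insert a s ha ih =>
      rw [Finset.sum_insert ha]
      intro hd
      have := hd.trans (Rat.add_den_dvd _ _)
      rcases (Nat.Prime.dvd_mul hp).mp this with h1 | h1
      · exact h a (Finset.mem_insert_self a s) h1
      · exact ih (fun i hi => h i (Finset.mem_insert_of_mem hi)) h1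

theorem stmt4 (p : ℕ) (hp : p.Prime) (hp5 : 5 ≤ p) (h2 : p % 3 = 2) :
    ratCongr p (∑ k ∈ Finset.range ((p - 5) / 3 + 1), (1 : ℚ) / (3 * k + 1)) 1 := by
  obtain ⟨n, hn⟩ : ∃ n, (p - 5) / 3 + 1 = n + 1 := ⟨(p - 5) / 3, rfl⟩
  have hpn : p = 3 * n + 5 := by omega
  -- the auxiliary rational
  set g : ℕ → ℚ := fun i => ((((3 * i + 4) * (3 * (n - i) + 1) : ℕ) : ℚ))⁻¹ with hg
  have hgden : ∀ i ∈ Finset.range n, ¬ p ∣ (g i).den := by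
    intro i hi hdvd
    rw [Finset.mem_range] at hi
    rw [hg] at hdvd
    simp only [Rat.inv_natCast_den] at hdvd
    rw [if_neg (by positivity)] at hdvd
    rcases (Nat.Prime.dvd_mul hp).mp hdvd with h1 | h1
    · have := Nat.le_of_dvd (by positivity) h1; omega
    · have := Nat.le_of_dvd (by positivity) h1; omega
  refine ⟨(∑ i ∈ Finset.range n, g i) / 2, ?_, ?_⟩
  · rw [Int.natCast_dvd_natCast]
    intro hdvd
    have h1 := hdvd.trans ((Rat.mul_den_dvd _ _).trans (Nat.mul_dvd_mul_left _
      (dvd_refl ((2 : ℚ)⁻¹.den))))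
    have h2' : ((2 : ℚ)⁻¹).den = 2 := by norm_num [Rat.inv_natCast_den]
    rw [div_eq_mul_inv] at hdvd
    have h3 := hdvd.trans (Rat.mul_den_dvd _ _)
    rw [h2'] at h3
    rcases (Nat.Prime.dvd_mul hp).mp h3 with h1 | h1
    · exact den_sum_not_dvd p hp _ _ hgden h1
    · have := Nat.le_of_dvd (by norm_num) h1; omega
  · -- the identity
    rw [hn, Finset.sum_range_succ']
    have h0 : (1 : ℚ) / (3 * (0 : ℕ) + 1) = 1 := by norm_num
    rw [h0]
    have key : 2 * (∑ i ∈ Finset.range n, (1 : ℚ) / (3 * (i + 1 : ℕ) + 1)) =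
        (p : ℚ) * ∑ i ∈ Finset.range n, g i := by
      have hrefl : ∑ i ∈ Finset.range n, (1 : ℚ) / (3 * (i + 1 : ℕ) + 1) =
          ∑ i ∈ Finset.range n, (1 : ℚ) / (3 * ((n - 1 - i) + 1 : ℕ) + 1) :=
        (Finset.sum_range_reflect (fun i => (1 : ℚ) / (3 * (i + 1 : ℕ) + 1)) n).symm
      rw [two_mul]
      nth_rewrite 2 [hrefl]
      rw [← Finset.sum_add_distrib, Finset.mul_sum]
      refine Finset.sum_congr rfl ?_
      intro i hi
      rw [Finset.mem_range] at hi
      have h1 : (n - 1 - i) + 1 = n - i := by omega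
      rw [h1, hg]
      have hc1 : ((n - i : ℕ) : ℚ) = (n : ℚ) - i := by
        have : (i : ℚ) ≤ n := by exact_mod_cast hi.le
        push_cast [Nat.cast_sub hi.le]; ring
      have hp' : (p : ℚ) = 3 * n + 5 := by exact_mod_cast congrArg (Nat.cast : ℕ → ℚ) hpn
      have ha : (3 * ((i : ℚ) + 1) + 1) ≠ 0 := by positivity
      have hb : (3 * ((n : ℚ) - i) + 1) ≠ 0 := by
        have : (i : ℚ) + 1 ≤ n := by exact_mod_cast hi
        nlinarith
      push_cast [hc1]
      rw [hp']
      field_simp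
      ring
    have := key
    push_cast at this ⊢
    linarith [this]
end

section
/- For any prime p ≥ 5 with p ≡ 2 (mod 3), the sum ∑_{k=0}^{(p-5)/3} 1/(3k+2) ≡ q_3/2 (mod p), where q_3 = (3^{p-1}-1)/p. -/
lemma prod_expand {ι : Type*} [DecidableEq ι] (p : ℤ) (s : Finset ι) (a b : ι → ℤ) :
    ∃ c : ℤ, ∏ i ∈ s, (a i + p * b i)
      = (∏ i ∈ s, a i) + p * (∑ i ∈ s, b i * ∏ j ∈ s.erase i, a j) + p^2 * c := by
  induction s using Finset.induction_on with
  | empty => exact ⟨0, by simp⟩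
  | @insert k s hk ih =>
    obtain ⟨c, hc⟩ := ih
    refine ⟨b k * (∑ i ∈ s, b i * ∏ j ∈ s.erase i, a j) + (a k + p * b k) * c, ?_⟩
    rw [Finset.prod_insert hk, hc, Finset.prod_insert hk]
    have hsum : ∑ i ∈ insert k s, b i * ∏ j ∈ (insert k s).erase i, a j
        = b k * ∏ j ∈ s, a j + a k * ∑ i ∈ s, b i * ∏ j ∈ s.erase i, a j := by
      rw [Finset.sum_insert hk, Finset.erase_insert hk, Finset.mul_sum]
      congr 1
      apply Finset.sum_congr rfl
      intro i hi
      rw [Finset.erase_insert_of_ne (by rintro rfl; exact hk hi), Finset.prod_insert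
        (fun h => hk (Finset.mem_of_mem_erase h))]
      ring
    rw [hsum]
    ring

lemma core (p : ℕ) (hp : p.Prime) (hp5 : 5 ≤ p) (h2 : p % 3 = 2) (q3 : ℤ)
    (hq3 : (p:ℤ) * q3 = 3^(p-1) - 1) :
    (q3 : ZMod p) = 2 * ∑ k ∈ Finset.range ((p-2)/3), (((3*k+2 : ℕ) : ZMod p))⁻¹ := by
  haveI : Fact p.Prime := ⟨hp⟩
  set m := (p - 2) / 3 with hmdef
  have hm : p = 3 * m + 2 := by omega
  have hm1 : 1 ≤ m := by omega
  have hpne : (p : ℤ) ≠ 0 := by exact_mod_cast hp.ne_zero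
  -- basic nonvanishing
  have hcast_ne : ∀ j : ℕ, j ≠ 0 → j < p → ((j : ℕ) : ZMod p) ≠ 0 := by
    intro j hj0 hjp h
    have := ZMod.val_cast_of_lt (n := p) hjp
    rw [h, ZMod.val_zero] at this
    omega
  have h3 : ((3 : ℕ) : ZMod p) ≠ 0 := hcast_ne 3 (by omega) (by omega)
  have h3' : (3 : ZMod p) ≠ 0 := by exact_mod_cast h3
  set t : (ZMod p)ˣ := Units.mk0 (3 : ZMod p) h3' with ht
  set v : (ZMod p)ˣ → ℕ := fun x => (x : ZMod p).val with hv
  set e : (ZMod p)ˣ → ℕ := fun x => 3 * v x / p with he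
  set r : (ZMod p)ˣ → ℕ := fun x => 3 * v x % p with hr
  have hval3 : (3 : ZMod p).val = 3 := by
    rw [show (3 : ZMod p) = ((3 : ℕ) : ZMod p) by push_cast; ring]
    exact ZMod.val_cast_of_lt (by omega)
  have F1 : ∀ x, r x = v (t * x) := by
    intro x
    show 3 * v x % p = ((t * x : (ZMod p)ˣ) : ZMod p).val
    have : ((t * x : (ZMod p)ˣ) : ZMod p) = (3 : ZMod p) * (x : ZMod p) := rfl
    rw [this, ZMod.val_mul, hval3]
  have F2 : ∀ x, 3 * v x = p * e x + r x := fun x => (Nat.div_add_mod _ _).symm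
  have hcard : Fintype.card (ZMod p)ˣ = p - 1 := ZMod.card_units p
  -- integer level
  set W : ℤ := ∏ x : (ZMod p)ˣ, (v x : ℤ) with hW
  set Sg : ℤ := ∑ x : (ZMod p)ˣ, (e x : ℤ) * ∏ y ∈ Finset.univ.erase x, (r y : ℤ) with hSg
  have hP1 : ∏ x : (ZMod p)ˣ, (3 * v x : ℤ) = 3 ^ (p - 1) * W := by
    rw [hW, Finset.prod_mul_distrib, Finset.prod_const, Finset.card_univ, hcard]
  have hP4 : ∏ x : (ZMod p)ˣ, (r x : ℤ) = W := by
    rw [hW]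
    calc ∏ x : (ZMod p)ˣ, (r x : ℤ) = ∏ x : (ZMod p)ˣ, (v (t * x) : ℤ) := by
          apply Finset.prod_congr rfl; intro x _; rw [F1]
      _ = ∏ x : (ZMod p)ˣ, (v x : ℤ) := Equiv.prod_comp (Equiv.mulLeft t) (fun y => (v y : ℤ))
  obtain ⟨c, hc⟩ := prod_expand (p : ℤ) Finset.univ (fun x => (r x : ℤ)) (fun x => (e x : ℤ))
  have hProd : ∏ x : (ZMod p)ˣ, (3 * v x : ℤ) = ∏ x : (ZMod p)ˣ, ((r x : ℤ) + p * e x) := by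
    apply Finset.prod_congr rfl
    intro x _
    have := F2 x

    omega
  have key : 3 ^ (p - 1) * W = W + (p : ℤ) * Sg + (p : ℤ) ^ 2 * c := by
    rw [← hP1, hProd, hc, hP4, hSg]
  have keyq : (p : ℤ) * (q3 * W) = (p : ℤ) * (Sg + (p : ℤ) * c) := by
    linear_combination key + W * hq3
  have hZ : q3 * W = Sg + (p : ℤ) * c := mul_left_cancel₀ hpne keyq
  -- cast to ZMod p
  have hZp : (q3 : ZMod p) * ((W : ℤ) : ZMod p) = ((Sg : ℤ) : ZMod p) := by
    have := congrArg (Int.cast : ℤ → ZMod p) hZ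
    push_cast at this
    simpa [ZMod.natCast_self] using this
  set W' : ZMod p := ∏ x : (ZMod p)ˣ, (x : ZMod p) with hW'
  have hvcast : ∀ x : (ZMod p)ˣ, ((v x : ℕ) : ZMod p) = (x : ZMod p) :=
    fun x => ZMod.natCast_rightInverse (x : ZMod p)
  have hWW : ((W : ℤ) : ZMod p) = W' := by
    rw [hW, hW']
    push_cast
    exact Finset.prod_congr rfl (fun x _ => hvcast x)
  have hrcast : ∀ y : (ZMod p)ˣ, ((r y : ℕ) : ZMod p) = 3 * (y : ZMod p) := by
    intro y
    rw [F1 y, hvcast (t * y)]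
    rfl
  have hW'ne : W' ≠ 0 := Finset.prod_ne_zero_iff.2 (fun a _ => a.ne_zero)
  have hxne : ∀ x : (ZMod p)ˣ, (3 : ZMod p) * (x : ZMod p) ≠ 0 :=
    fun x => mul_ne_zero h3' x.ne_zero
  have hfermat : (3 : ZMod p) ^ (p - 1) = 1 := ZMod.pow_card_sub_one_eq_one h3'
  have hprodall : ∏ y : (ZMod p)ˣ, ((3 : ZMod p) * (y : ZMod p)) = W' := by
    rw [Finset.prod_mul_distrib, Finset.prod_const, Finset.card_univ, hcard, hfermat, one_mul, hW']
  have herase : ∀ x : (ZMod p)ˣ, ∏ y ∈ Finset.univ.erase x, ((3 : ZMod p) * (y : ZMod p))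
      = W' * ((3 : ZMod p) * (x : ZMod p))⁻¹ := by
    intro x
    rw [eq_mul_inv_iff_mul_eq₀ (hxne x)]
    rw [Finset.prod_erase_mul _ _ (Finset.mem_univ x)]
    exact hprodall
  have hSgp : ((Sg : ℤ) : ZMod p) = W' * ∑ x : (ZMod p)ˣ, (e x : ZMod p) * ((3 : ZMod p) * (x : ZMod p))⁻¹ := by
    rw [hSg]
    push_cast
    rw [Finset.mul_sum]
    apply Finset.sum_congr rfl
    intro x _
    rw [show ∏ y ∈ Finset.univ.erase x, ((r y : ℕ) : ZMod p)
        = ∏ y ∈ Finset.univ.erase x, ((3 : ZMod p) * (y : ZMod p)) from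
      Finset.prod_congr rfl (fun y _ => hrcast y), herase x]
    ring
  have hq3' : (q3 : ZMod p) = ∑ x : (ZMod p)ˣ, (e x : ZMod p) * ((3 : ZMod p) * (x : ZMod p))⁻¹ := by
    have := hZp
    rw [hWW, hSgp] at this
    have h := mul_left_cancel₀ hW'ne (by rw [← this]; ring : W' * (q3 : ZMod p) = W' * ∑ x : (ZMod p)ˣ, (e x : ZMod p) * ((3 : ZMod p) * (x : ZMod p))⁻¹)
    exact h
  -- convert to a sum over Icc 1 (p-1)
  set F : ℕ → ZMod p := fun j => ((3 * j / p : ℕ) : ZMod p) * ((j : ℕ) : ZMod p)⁻¹ with hF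
  have hbij : ∑ x : (ZMod p)ˣ, (e x : ZMod p) * ((x : ZMod p))⁻¹
      = ∑ j ∈ Finset.Icc 1 (p - 1), F j := by
    apply Finset.sum_bij (fun (x : (ZMod p)ˣ) (_ : x ∈ Finset.univ) => v x)
    · intro a _
      simp only [Finset.mem_Icc]
      have h1 : v a ≠ 0 := fun h => a.ne_zero ((ZMod.val_eq_zero _).1 h)
      have h2 : v a < p := ZMod.val_lt _
      omega
    · intro a _ b _ h
      exact Units.ext (ZMod.val_injective p h)
    · intro j hj
      rw [Finset.mem_Icc] at hj
      have hjne : ((j : ℕ) : ZMod p) ≠ 0 := hcast_ne j (by omega) (by omega)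
      refine ⟨Units.mk0 ((j : ℕ) : ZMod p) hjne, Finset.mem_univ _, ?_⟩
      exact ZMod.val_cast_of_lt (show j < p by omega)
    · intro x _
      rw [hF]
      have : ((v x : ℕ) : ZMod p) = (x : ZMod p) := hvcast x
      simp only []
      rw [this]
  have hsum3 : ∀ s : Finset ℕ, ∑ j ∈ s, F j * 1 = ∑ j ∈ s, F j := by
    intro s; simp
  -- split the interval
  set A' : ZMod p := ∑ j ∈ Finset.Icc 1 m, ((j : ℕ) : ZMod p)⁻¹ with hA'
  set B' : ZMod p := ∑ j ∈ Finset.Ioc m (2*m+1), ((j : ℕ) : ZMod p)⁻¹ with hB'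
  set C' : ZMod p := ∑ j ∈ Finset.Ioc (2*m+1) (3*m+1), ((j : ℕ) : ZMod p)⁻¹ with hC'
  have hsplit : ∑ j ∈ Finset.Icc 1 (p - 1), F j = B' + 2 * C' := by
    have e1 : Finset.Icc 1 (p-1) = Finset.Ioc 0 (3*m+1) := by
      rw [show p - 1 = 3*m+1 by omega]
      exact Finset.Icc_add_one_left_eq_Ioc 0 (3*m+1)
    rw [e1, ← Finset.sum_Ioc_consecutive F (show (0:ℕ) ≤ 2*m+1 by omega) (show 2*m+1 ≤ 3*m+1 by omega),
      ← Finset.sum_Ioc_consecutive F (show (0:ℕ) ≤ m by omega) (show m ≤ 2*m+1 by omega)]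
    have s1 : ∑ j ∈ Finset.Ioc 0 m, F j = 0 := by
      apply Finset.sum_eq_zero
      intro j hj
      rw [Finset.mem_Ioc] at hj
      rw [hF]
      simp only []
      rw [show 3 * j / p = 0 from Nat.div_eq_of_lt (by omega)]
      simp
    have s2 : ∑ j ∈ Finset.Ioc m (2*m+1), F j = B' := by
      rw [hB']
      apply Finset.sum_congr rfl
      intro j hj
      rw [Finset.mem_Ioc] at hj
      rw [hF]
      simp only []
      rw [show 3 * j / p = 1 from Nat.div_eq_of_lt_le (by omega) (by omega)]
      simp
    have s3 : ∑ j ∈ Finset.Ioc (2*m+1) (3*m+1), F j = 2 * C' := by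
      rw [hC', Finset.mul_sum]
      apply Finset.sum_congr rfl
      intro j hj
      rw [Finset.mem_Ioc] at hj
      rw [hF]
      simp only []
      rw [show 3 * j / p = 2 from Nat.div_eq_of_lt_le (by omega) (by omega)]
      push_cast
      ring
    rw [s1, s2, s3]
    ring
  -- reflection
  have hrefl : ∀ a b : ℕ, 1 ≤ a → b ≤ p - 1 →
      ∑ j ∈ Finset.Icc a b, ((j : ℕ) : ZMod p)⁻¹
        = -∑ j ∈ Finset.Icc (p - b) (p - a), ((j : ℕ) : ZMod p)⁻¹ := by
    intro a b ha hb
    rw [← Finset.sum_neg_distrib]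
    apply Finset.sum_nbij' (fun j => p - j) (fun j => p - j)
    · intro x hx; rw [Finset.mem_Icc] at *; omega
    · intro x hx; rw [Finset.mem_Icc] at *; omega
    · intro x hx; rw [Finset.mem_Icc] at hx; omega
    · intro x hx; rw [Finset.mem_Icc] at hx; omega
    · intro x hx
      rw [Finset.mem_Icc] at hx
      have hxp : x ≤ p := by omega
      rw [Nat.cast_sub hxp, ZMod.natCast_self, zero_sub, inv_neg, neg_neg]
  have h2ne : (2 : ZMod p) ≠ 0 := by
    have := hcast_ne 2 (by omega) (by omega)
    exact_mod_cast this
  have hBzero : B' = 0 := by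
    have e1 : ∑ j ∈ Finset.Ioc m (2*m+1), ((j : ℕ) : ZMod p)⁻¹
        = -∑ j ∈ Finset.Ioc m (2*m+1), ((j : ℕ) : ZMod p)⁻¹ := by
      calc ∑ j ∈ Finset.Ioc m (2*m+1), ((j : ℕ) : ZMod p)⁻¹
          = ∑ j ∈ Finset.Icc (m+1) (2*m+1), ((j : ℕ) : ZMod p)⁻¹ := by
            rw [Finset.Icc_add_one_left_eq_Ioc]
        _ = -∑ j ∈ Finset.Icc (p-(2*m+1)) (p-(m+1)), ((j : ℕ) : ZMod p)⁻¹ :=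
            hrefl (m+1) (2*m+1) (by omega) (by omega)
        _ = -∑ j ∈ Finset.Ioc m (2*m+1), ((j : ℕ) : ZMod p)⁻¹ := by
            rw [show p - (2*m+1) = m+1 by omega, show p - (m+1) = 2*m+1 by omega,
              Finset.Icc_add_one_left_eq_Ioc]
    have h2 : (2 : ZMod p) * B' = 0 := by rw [hB']; linear_combination e1
    exact (mul_eq_zero.1 h2).resolve_left h2ne
  have hCA : C' = -A' := by
    rw [hC', show Finset.Ioc (2*m+1) (3*m+1) = Finset.Icc (2*m+2) (3*m+1) from (Finset.Icc_add_one_left_eq_Ioc _ _).symm,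
      hrefl (2*m+2) (3*m+1) (by omega) (by omega),
      show p - (3*m+1) = 1 by omega, show p - (2*m+2) = m by omega, hA']
  -- rewrite hq3' via the bijection
  have hq3'' : (q3 : ZMod p) = (3 : ZMod p)⁻¹ * (B' + 2 * C') := by
    rw [hq3', ← hsplit, ← hbij, Finset.mul_sum]
    apply Finset.sum_congr rfl
    intro x _
    rw [mul_inv]
    ring
  -- the sum S
  have hS : ∑ k ∈ Finset.range m, (((3*k+2 : ℕ) : ZMod p))⁻¹ = -((3 : ZMod p)⁻¹ * A') := by
    rw [← Finset.sum_range_reflect (fun k => (((3*k+2 : ℕ) : ZMod p))⁻¹) m]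
    have step : ∀ k ∈ Finset.range m, (((3*(m-1-k)+2 : ℕ) : ZMod p))⁻¹
        = -((3 : ZMod p)⁻¹ * (((k+1 : ℕ) : ZMod p))⁻¹) := by
      intro k hk
      rw [Finset.mem_range] at hk
      rw [show 3*(m-1-k)+2 = p - 3*(k+1) by omega]
      rw [Nat.cast_sub (by omega), ZMod.natCast_self, zero_sub, inv_neg]
      rw [show ((3*(k+1) : ℕ) : ZMod p) = ((3:ℕ) : ZMod p) * ((k+1 : ℕ) : ZMod p) by push_cast; ring]
      rw [mul_inv]
      congr 2
    rw [Finset.sum_congr rfl step, Finset.sum_neg_distrib, ← Finset.mul_sum]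
    have hAeq : A' = ∑ k ∈ Finset.range m, (((k+1 : ℕ)) : ZMod p)⁻¹ := by
      rw [hA', show Finset.Icc 1 m = Finset.Ico 1 (m+1) by rw [Finset.Ico_add_one_right_eq_Icc],
        Finset.sum_Ico_eq_sum_range]
      simp only [Nat.add_sub_cancel]
      apply Finset.sum_congr rfl
      intro k _
      rw [Nat.add_comm 1 k]
    rw [hAeq]
  rw [hS, hq3'', hBzero, hCA]
  ring

theorem stmt5 (p : ℕ) (hp : p.Prime) (hp5 : 5 ≤ p) (h2 : p % 3 = 2) :
    ratCongr p (∑ k ∈ Finset.range ((p - 5) / 3 + 1), (1 : ℚ) / (3 * k + 2))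
      (((3 ^ (p - 1) - 1 : ℚ) / p) / 2) := by
  haveI : Fact p.Prime := ⟨hp⟩
  set m := (p - 5) / 3 + 1 with hmdef
  have hm : p = 3 * m + 2 := by omega
  have h3' : (3 : ZMod p) ≠ 0 := by
    intro h
    have h0 : ((3 : ℕ) : ZMod p) = 0 := by exact_mod_cast h
    have := ZMod.val_cast_of_lt (show (3 : ℕ) < p by omega)
    rw [h0, ZMod.val_zero] at this
    omega
  have hdvd : (p : ℤ) ∣ 3 ^ (p - 1) - 1 := by
    rw [← ZMod.intCast_zmod_eq_zero_iff_dvd]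
    push_cast
    rw [ZMod.pow_card_sub_one_eq_one h3']
    ring
  set q3 : ℤ := (3 ^ (p - 1) - 1) / p with hq3def
  have hq3 : (p : ℤ) * q3 = 3 ^ (p - 1) - 1 := Int.mul_ediv_cancel' hdvd
  have hcore := core p hp hp5 h2 q3 hq3
  have hm2 : (p - 2) / 3 = m := by omega
  rw [hm2] at hcore
  push_cast at hcore
  have hpq : (p : ℚ) ≠ 0 := Nat.cast_ne_zero.2 (by omega)
  have hY : ((3 ^ (p - 1) - 1 : ℚ) / p) / 2 = (q3 : ℚ) / 2 := by
    have h1 : (3 ^ (p - 1) - 1 : ℚ) = ((3 ^ (p - 1) - 1 : ℤ) : ℚ) := by push_cast; ring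
    rw [h1, ← hq3]
    push_cast
    rw [mul_comm, mul_div_assoc, div_self hpq, mul_one]
  set Pk : ℤ := ∏ k ∈ Finset.range m, (3 * (k : ℤ) + 2) with hPk
  set E : ℕ → ℤ := fun k => ∏ j ∈ (Finset.range m).erase k, (3 * (j : ℤ) + 2) with hE
  set N : ℤ := 2 * (∑ k ∈ Finset.range m, E k) - Pk * q3 with hN
  set D : ℤ := 2 * Pk with hD
  have hfpos : ∀ k : ℕ, (0 : ℤ) < 3 * (k : ℤ) + 2 := by intro k; positivity
  have hPkpos : 0 < Pk := Finset.prod_pos (fun k _ => hfpos k)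
  have hDne : D ≠ 0 := by rw [hD]; positivity
  have hD0 : ((D : ℤ) : ℚ) ≠ 0 := Int.cast_ne_zero.2 hDne
  have hXY : (∑ k ∈ Finset.range m, (1 : ℚ) / (3 * k + 2)) - (q3 : ℚ) / 2
      = (N : ℚ) / (D : ℚ) := by
    rw [eq_div_iff hD0, sub_mul, Finset.sum_mul]
    have hterm : ∀ k ∈ Finset.range m, ((1 : ℚ) / (3 * (k : ℚ) + 2)) * ((D : ℤ) : ℚ)
        = 2 * ((E k : ℤ) : ℚ) := by
      intro k hk
      have hsplit : Pk = (3 * (k : ℤ) + 2) * E k := (Finset.mul_prod_erase _ _ hk).symm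
      have hne : (3 * (k : ℚ) + 2) ≠ 0 := by positivity
      rw [hD, hsplit]
      push_cast
      field_simp
    rw [Finset.sum_congr rfl hterm, ← Finset.mul_sum, hN, hD]
    push_cast
    ring
  -- p divides N
  have hcne : ∀ k ∈ Finset.range m, (3 * ((k : ℕ) : ZMod p) + 2) ≠ 0 := by
    intro k hk h
    rw [Finset.mem_range] at hk
    have h0 : ((3 * k + 2 : ℕ) : ZMod p) = 0 := by push_cast; exact_mod_cast h
    have := ZMod.val_cast_of_lt (show 3 * k + 2 < p by omega)
    rw [h0, ZMod.val_zero] at this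
    omega
  have hdvdN : (p : ℤ) ∣ N := by
    rw [← ZMod.intCast_zmod_eq_zero_iff_dvd, hN, hE, hPk]
    push_cast
    have herase2 : ∀ k ∈ Finset.range m,
        ∏ j ∈ (Finset.range m).erase k, (3 * ((j : ℕ) : ZMod p) + 2)
          = (∏ j ∈ Finset.range m, (3 * ((j : ℕ) : ZMod p) + 2)) * (3 * ((k : ℕ) : ZMod p) + 2)⁻¹ := by
      intro k hk
      rw [eq_mul_inv_iff_mul_eq₀ (hcne k hk), Finset.prod_erase_mul _ _ hk]
    rw [Finset.sum_congr rfl herase2, ← Finset.mul_sum]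
    rw [show (∑ k ∈ Finset.range m, (3 * ((k : ℕ) : ZMod p) + 2)⁻¹) = ∑ k ∈ Finset.range m, (3 * ((k : ℕ) : ZMod p) + 2)⁻¹ from rfl]
    linear_combination (-(∏ j ∈ Finset.range m, (3 * ((j : ℕ) : ZMod p) + 2))) * hcore
  refine ⟨((N / p : ℤ) : ℚ) / ((D : ℤ) : ℚ), ?_, ?_⟩
  · intro hdvdden
    have hden : (((((N / p : ℤ) : ℚ)) / ((D : ℤ) : ℚ)).den : ℤ) ∣ D := by
      rw [← Rat.divInt_eq_div]
      exact Rat.den_dvd _ _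
    have hpD : (p : ℤ) ∣ D := dvd_trans hdvdden hden
    have hDz : ((D : ℤ) : ZMod p) = 0 := (ZMod.intCast_zmod_eq_zero_iff_dvd _ _).2 hpD
    have h2ne : (2 : ZMod p) ≠ 0 := by
      intro h
      have h0 : ((2 : ℕ) : ZMod p) = 0 := by exact_mod_cast h
      have := ZMod.val_cast_of_lt (show (2 : ℕ) < p by omega)
      rw [h0, ZMod.val_zero] at this
      omega
    rw [hD, hPk] at hDz
    push_cast at hDz
    rcases mul_eq_zero.1 hDz with h | h
    · exact h2ne h
    · exact (Finset.prod_ne_zero_iff.2 hcne) h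
  · rw [hY, hXY]
    have hNp : ((N : ℤ) : ℚ) = (p : ℚ) * ((N / p : ℤ) : ℚ) := by
      rw [show ((N / p : ℤ) : ℚ) = (((N / p : ℤ) : ℤ) : ℚ) from rfl]
      rw [← Int.cast_natCast, ← Int.cast_mul, Int.mul_ediv_cancel' hdvdN]
    rw [hNp, mul_div_assoc]
end
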